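/- Define a family of marked trees M_k inductively: M_1 contains the single rooted one-edge tree with root marked 0 and its child marked 1; and M_k is obtained from M_{k−1} by, for each marked tree, either (i) adding a new 1-marked child to the root, or (ii) re-rooting at a 1-marked neighbor u of the root, setting u's mark to 0, and attaching a new 1-marked leaf to u (removing duplicates up to isomorphism). Then for every k ≥ 1, |M_k| = 2^{k−1}. -/
import Mathlib


/-- A finite rooted tree with vertices marked by `Bool` (`true` = mark 1, `false` = mark 0);
the top node is the root. -/
inductive RTree where
  | node (mark : Bool) (children : List RTree)

namespace RTree

mutual
  /-- Root-preserving, mark-preserving isomorphism of marked rooted trees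
  (children are identified up to permutation). -/
  inductive Iso : RTree → RTree → Prop where
    | node {m : Bool} {cs cs' cs'' : List RTree} :
        List.Perm cs' cs'' → IsoList cs cs'' → Iso (.node m cs) (.node m cs')
  /-- Pointwise isomorphism of lists of marked trees. -/
  inductive IsoList : List RTree → List RTree → Prop where
    | nil : IsoList [] []
    | cons {t t' : RTree} {l l' : List RTree} :
        Iso t t' → IsoList l l' → IsoList (t :: l) (t' :: l')
end

/-- Membership in the inductively defined family `M_k` of marked trees: `M_1` is the one-edge
tree with `0`-marked root and `1`-marked child; `M_{k+1}` is obtained from `M_k` by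
(i) adding a new `1`-marked child to the root, or (ii) re-rooting at a `1`-marked neighbor `u`
of the root, setting `u`'s mark to `0`, and attaching a new `1`-marked leaf to `u`. -/
inductive Mem : ℕ → RTree → Prop where
  | base : Mem 1 (.node false [.node true []])
  | op1 {k : ℕ} {m : Bool} {cs : List RTree} :
      Mem k (.node m cs) → Mem (k + 1) (.node m (.node true [] :: cs))
  | op2 {k : ℕ} {m : Bool} {l1 l2 cs' : List RTree} :
      Mem k (.node m (l1 ++ .node true cs' :: l2)) →
      Mem (k + 1) (.node false (.node true [] :: (cs' ++ [.node m (l1 ++ l2)])))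

end RTree


namespace RTree

/-- The `1`-marked leaf. -/
def T0 : RTree := .node true []

/-- Children lists of canonical trees. -/
def mkAux : List ℕ → List RTree
  | [] => []
  | b :: l => [.node false (List.replicate b T0 ++ mkAux l)]

/-- The canonical tree for data `(a, l)`. -/
def mk (a : ℕ) (l : List ℕ) : RTree := .node false (List.replicate a T0 ++ mkAux l)

/-- `Spec t a l` : `t` is, up to permutation of children at each level, the canonical
tree `mk a l`. -/
inductive Spec : RTree → ℕ → List ℕ → Prop
  | leaf {cs : List RTree} {a : ℕ} : cs.Perm (List.replicate a T0) →
      Spec (.node false cs) a []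
  | cons {cs : List RTree} {a b : ℕ} {t : RTree} {l : List ℕ} :
      cs.Perm (List.replicate a T0 ++ [t]) → Spec t b l →
      Spec (.node false cs) a (b :: l)

lemma Spec.false_mark {t : RTree} {a : ℕ} {l : List ℕ} (h : Spec t a l) :
    ∃ cs, t = .node false cs := by
  cases h <;> exact ⟨_, rfl⟩

lemma iso_T0 {t : RTree} (h : Iso T0 t) : t = T0 := by
  cases h with
  | node p hl =>
    cases hl
    rw [p.eq_nil]
    rfl

lemma iso_refl_T0 : Iso T0 T0 := Iso.node (List.Perm.refl []) .nil

lemma isoList_forall₂ : ∀ {l l' : List RTree}, IsoList l l' → List.Forall₂ Iso l l' := by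
  intro l
  induction l with
  | nil => intro l' h; cases h; exact .nil
  | cons x xs ih =>
    intro l' h
    cases h with
    | cons hx hl => exact .cons hx (ih hl)

lemma forall₂_isoList {l l' : List RTree} (h : List.Forall₂ Iso l l') : IsoList l l' := by
  induction h with
  | nil => exact .nil
  | cons h _ ih => exact .cons h ih

/-- Transport a pointwise isomorphism along a permutation of the left list. -/
lemma perm_forall₂ {l₁ l₂ : List RTree} (hp : l₁.Perm l₂) :
    ∀ {l₃ : List RTree}, List.Forall₂ Iso l₁ l₃ →
      ∃ l₄, l₃.Perm l₄ ∧ List.Forall₂ Iso l₂ l₄ := by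
  induction hp with
  | nil =>
    intro l₃ h
    cases h
    exact ⟨[], .nil, .nil⟩
  | cons x p ih =>
    intro l₃ h
    cases h with
    | cons hx hl =>
      obtain ⟨l₄, hp4, hf⟩ := ih hl
      exact ⟨_, hp4.cons _, .cons hx hf⟩
  | swap x y l =>
    intro l₃ h
    cases h with
    | cons hy h' =>
      cases h' with
      | cons hx h'' =>
        exact ⟨_, List.Perm.swap _ _ _, .cons hx (.cons hy h'')⟩
  | trans p₁ p₂ ih₁ ih₂ =>
    intro l₃ h
    obtain ⟨l₄, h4, hf⟩ := ih₁ h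
    obtain ⟨l₅, h5, hf'⟩ := ih₂ hf
    exact ⟨l₅, h4.trans h5, hf'⟩

lemma forall₂_replicate_refl (a : ℕ) :
    List.Forall₂ Iso (List.replicate a T0) (List.replicate a T0) := by
  induction a with
  | zero => exact .nil
  | succ n ih => rw [List.replicate_succ]; exact .cons iso_refl_T0 ih

lemma forall₂_replicate {a : ℕ} :
    ∀ {d : List RTree}, List.Forall₂ Iso (List.replicate a T0) d →
      d = List.replicate a T0 := by
  induction a with
  | zero => intro d h; cases h; rfl
  | succ n ih =>
    intro d h
    rw [List.replicate_succ] at h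
    cases h with
    | cons hx h' => rw [iso_T0 hx, ih h', List.replicate_succ]

lemma forall₂_replicate_snoc {a : ℕ} {u : RTree} :
    ∀ {d : List RTree}, List.Forall₂ Iso (List.replicate a T0 ++ [u]) d →
      ∃ u', d = List.replicate a T0 ++ [u'] ∧ Iso u u' := by
  induction a with
  | zero =>
    intro d h
    simp only [List.replicate, List.nil_append] at h
    cases h with
    | cons hu h' => cases h'; exact ⟨_, by simp, hu⟩
  | succ n ih =>
    intro d h
    rw [List.replicate_succ, List.cons_append] at h
    cases h with
    | cons hx h' =>
      obtain ⟨u', rfl, hu⟩ := ih h'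
      exact ⟨u', by rw [iso_T0 hx, List.replicate_succ, List.cons_append], hu⟩

/-- `Spec` is invariant under isomorphism. -/
lemma Spec.iso {t : RTree} {a : ℕ} {l : List ℕ} (h : Spec t a l) :
    ∀ {t' : RTree}, Iso t t' → Spec t' a l := by
  induction h with
  | leaf hp =>
    intro t' hiso
    cases hiso with
    | node p hl =>
      obtain ⟨d, hd, hf⟩ := perm_forall₂ hp (isoList_forall₂ hl)
      rw [forall₂_replicate hf] at hd
      exact .leaf (p.trans hd)
  | cons hp _ ih =>
    intro t' hiso
    cases hiso with
    | node p hl =>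
      obtain ⟨d, hd, hf⟩ := perm_forall₂ hp (isoList_forall₂ hl)
      obtain ⟨u', rfl, hu⟩ := forall₂_replicate_snoc hf
      exact .cons (p.trans hd) (ih hu)

/-- Uniqueness of the spec data. -/
lemma Spec.unique {t : RTree} {a : ℕ} {l : List ℕ} (h : Spec t a l) :
    ∀ {a' : ℕ} {l' : List ℕ}, Spec t a' l' → a = a' ∧ l = l' := by
  induction h with
  | leaf hp =>
    rename_i cs₀ a₀
    intro a' l' h'
    cases h' with
    | leaf hp' =>
      have hlen := (hp.symm.trans hp').length_eq
      simp only [List.length_replicate] at hlen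
      exact ⟨hlen, rfl⟩
    | cons hp' hs' =>
      exfalso
      rename_i b₂ u₂ l₂
      have hmem : u₂ ∈ List.replicate a₀ T0 :=
        hp.subset (hp'.symm.subset (by simp))
      obtain ⟨cs', hcs'⟩ := hs'.false_mark
      rw [hcs'] at hmem
      exact absurd (List.eq_of_mem_replicate hmem) (by simp [T0])
  | cons hp hs ih =>
    rename_i cs₀ a₀ b₀ u₀ l₀
    intro a' l' h'
    cases h' with
    | leaf hp' =>
      exfalso
      have hmem : u₀ ∈ List.replicate a' T0 :=
        hp'.subset (hp.symm.subset (by simp))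
      obtain ⟨cs', hcs'⟩ := hs.false_mark
      rw [hcs'] at hmem
      exact absurd (List.eq_of_mem_replicate hmem) (by simp [T0])
    | cons hp' hs' =>
      rename_i b₂ u₂ l₂
      have hperm := hp.symm.trans hp'
      have hlen := hperm.length_eq
      simp only [List.length_append, List.length_replicate, List.length_singleton] at hlen
      have ha : a₀ = a' := by omega
      subst ha
      have hmem : u₂ ∈ List.replicate a₀ T0 ++ [u₀] := hperm.symm.subset (by simp)
      have huu : u₂ = u₀ := by
        rcases List.mem_append.1 hmem with h1 | h2
        · obtain ⟨cs', hcs'⟩ := hs'.false_mark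
          rw [hcs'] at h1
          exact absurd (List.eq_of_mem_replicate h1) (by simp [T0])
        · exact (List.mem_singleton.1 h2)
      subst huu
      obtain ⟨hb, hl⟩ := ih hs'
      exact ⟨rfl, by rw [hb, hl]⟩

/-- Trees with the same spec data are isomorphic. -/
lemma spec_iso_spec {t : RTree} {a : ℕ} {l : List ℕ} (h : Spec t a l) :
    ∀ {t' : RTree}, Spec t' a l → Iso t t' := by
  induction h with
  | leaf hp =>
    intro t' h'
    cases h' with
    | leaf hp' =>
      obtain ⟨d, hd, hf⟩ := perm_forall₂ hp.symm (forall₂_replicate_refl _)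
      exact .node (hp'.trans hd) (forall₂_isoList hf)
  | cons hp hsb ih =>
    rename_i cs₀ a₀ b₀ u₀ l₀
    intro t' h'
    cases h' with
    | cons hp' hsb' =>
      rename_i cs₁ u₁
      have hf : List.Forall₂ Iso (List.replicate a₀ T0 ++ [u₀])
          (List.replicate a₀ T0 ++ [u₁]) :=
        List.rel_append (forall₂_replicate_refl a₀) (.cons (ih hsb') .nil)
      obtain ⟨d, hd, hf2⟩ := perm_forall₂ hp.symm hf
      exact .node (hp'.trans hd) (forall₂_isoList hf2)

/-- Every member of `M_k` has spec data of total weight `k`. -/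
lemma mem_spec {k : ℕ} {t : RTree} (h : Mem k t) :
    ∃ a l, Spec t a l ∧ 1 ≤ a ∧ a + (List.sum l + List.length l) = k := by
  induction h with
  | base =>
    exact ⟨1, [], .leaf (by simp [T0]), le_refl 1, by simp⟩
  | op1 h ih =>
    obtain ⟨a, l, hs, ha, hsum⟩ := ih
    cases hs with
    | leaf hp =>
      exact ⟨a + 1, [], .leaf (by rw [List.replicate_succ]; exact hp.cons _),
        by omega, by simp at hsum ⊢; omega⟩
    | cons hp hsb =>
      rename_i b u l'
      refine ⟨a + 1, b :: l', .cons ?_ hsb, by omega, by simp at hsum ⊢; omega⟩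
      rw [List.replicate_succ, List.cons_append]
      exact hp.cons _
  | op2 h ih =>
    obtain ⟨a, l, hs, ha, hsum⟩ := ih
    rename_i k m l1 l2 cs'
    cases hs with
    | leaf hp =>
      have hmem : RTree.node true cs' ∈ List.replicate a T0 := hp.subset (by simp)
      have hT : RTree.node true cs' = T0 := List.eq_of_mem_replicate hmem
      have hcs' : cs' = [] := by
        have := congrArg (fun t => match t with | RTree.node _ c => c) hT
        simpa [T0] using this
      subst hcs'
      obtain ⟨a', rfl⟩ : ∃ a', a = a' + 1 := ⟨a - 1, by omega⟩
      have hp2 : (T0 :: (l1 ++ l2)).Perm (List.replicate (a' + 1) T0) :=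
        (List.perm_middle).symm.trans hp
      rw [List.replicate_succ] at hp2
      have hp3 := hp2.cons_inv
      refine ⟨1, [a'], .cons ?_ (.leaf hp3), le_refl 1, ?_⟩
      · exact List.Perm.refl _
      · simp at hsum ⊢; omega
    | cons hp hsb =>
      rename_i b u l'
      have hmem : RTree.node true cs' ∈ List.replicate a T0 ++ [u] := hp.subset (by simp)
      have hT : RTree.node true cs' = T0 := by
        rcases List.mem_append.1 hmem with h1 | h2
        · exact List.eq_of_mem_replicate h1
        · exfalso
          obtain ⟨cs'', hcs''⟩ := hsb.false_mark
          have := (List.mem_singleton.1 h2)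
          rw [hcs''] at this
          exact absurd this (by simp)
      have hcs' : cs' = [] := by
        have := congrArg (fun t => match t with | RTree.node _ c => c) hT
        simpa [T0] using this
      subst hcs'
      obtain ⟨a', rfl⟩ : ∃ a', a = a' + 1 := ⟨a - 1, by omega⟩
      have hp2 : (T0 :: (l1 ++ l2)).Perm (List.replicate (a' + 1) T0 ++ [u]) :=
        (List.perm_middle).symm.trans hp
      rw [List.replicate_succ, List.cons_append] at hp2
      have hp3 := hp2.cons_inv
      refine ⟨1, a' :: b :: l', .cons ?_ (.cons hp3 hsb), le_refl 1, ?_⟩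
      · exact List.Perm.refl _
      · simp at hsum ⊢; omega

/-- Conversely, every valid data arises from a member of `M_k`. -/
lemma mem_mk : ∀ k a l, 1 ≤ a → a + (List.sum l + List.length l) = k → Mem k (mk a l) := by
  intro k
  induction k with
  | zero => intro a l ha h; omega
  | succ n ih =>
    intro a l ha h
    rcases Nat.lt_or_ge 1 a with h2 | h2
    · obtain ⟨a', rfl⟩ : ∃ a', a = a' + 1 := ⟨a - 1, by omega⟩
      have hm := (ih a' l (by omega) (by omega)).op1
      show Mem (n + 1) (.node false (List.replicate (a' + 1) T0 ++ mkAux l))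
      rw [List.replicate_succ, List.cons_append]
      exact hm
    · have ha1 : a = 1 := by omega
      subst ha1
      cases l with
      | nil =>
        have hn : n = 0 := by simp at h; omega
        subst hn
        show Mem 1 (.node false (List.replicate 1 T0 ++ mkAux []))
        simpa [mkAux, T0] using Mem.base
      | cons b l' =>
        have hb := ih (b + 1) l' (by omega) (by simp at h ⊢; omega)
        have hb' : Mem n (.node false ([] ++ RTree.node true [] ::
            (List.replicate b T0 ++ mkAux l'))) := by
          show Mem n (.node false (T0 :: (List.replicate b T0 ++ mkAux l')))
          rw [← List.cons_append, ← List.replicate_succ]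
          exact hb
        have h2 := hb'.op2
        show Mem (n + 1) (.node false (List.replicate 1 T0 ++ mkAux (b :: l')))
        simpa [mkAux, mk, T0] using h2

lemma spec_mk : ∀ l a, Spec (mk a l) a l := by
  intro l
  induction l with
  | nil => intro a; exact .leaf (by simp [mk, mkAux])
  | cons b l' ih =>
    intro a
    exact .cons (List.Perm.refl _) (ih b)

end RTree

section Counting

open RTree

variable {k : ℕ}

private def validP (k : ℕ) (p : ℕ × List ℕ) : Prop :=
  1 ≤ p.1 ∧ p.1 + (List.sum p.2 + List.length p.2) = k

private lemma sum_map_add_one (l : List ℕ) :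
    (l.map (· + 1)).sum = l.sum + l.length := by
  induction l with
  | nil => simp
  | cons b l ih => simp [ih]; omega

private lemma map_sub_map_add (l : List ℕ) : (l.map (· + 1)).map (· - 1) = l := by
  induction l with
  | nil => rfl
  | cons b l ih => simp [ih]

private lemma map_add_map_sub (l : List ℕ) (hl : ∀ x ∈ l, 0 < x) :
    (l.map (· - 1)).map (· + 1) = l := by
  induction l with
  | nil => rfl
  | cons b l ih =>
    have hb := hl b (by simp)
    have ht := ih (fun x hx => hl x (by simp [hx]))
    simp only [List.map_cons, List.map_map] at ht ⊢
    rw [ht]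
    congr 1
    omega

private lemma sum_map_sub_one (l : List ℕ) (hl : ∀ x ∈ l, 0 < x) :
    (l.map (· - 1)).sum + l.length = l.sum := by
  induction l with
  | nil => simp
  | cons b l ih =>
    have hb := hl b (by simp)
    have := ih (fun x hx => hl x (by simp [hx]))
    simp only [List.map_cons, List.sum_cons, List.length_cons]
    omega

/-- Valid data for `k` is in bijection with compositions of `k`. -/
private noncomputable def validEquiv (k : ℕ) (hk : 1 ≤ k) :
    {p : ℕ × List ℕ // validP k p} ≃ Composition k where
  toFun p := ⟨p.1.1 :: p.1.2.map (· + 1), by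
      intro i hi
      rcases List.mem_cons.1 hi with h | h
      · subst h; exact p.2.1
      · obtain ⟨x, _, rfl⟩ := List.mem_map.1 h; omega, by
      have := p.2.2
      simp only [List.sum_cons, sum_map_add_one]
      omega⟩
  invFun c := ⟨(c.blocks.headI, c.blocks.tail.map (· - 1)), by
      have hne : c.blocks ≠ [] := by
        intro h
        have := c.blocks_sum
        rw [h] at this
        simp at this
        omega
      obtain ⟨b, t, hbt⟩ := List.exists_cons_of_ne_nil hne
      have hsum := c.blocks_sum
      have hpos : ∀ x ∈ c.blocks, 0 < x := fun x hx => c.blocks_pos hx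
      rw [hbt] at hsum hpos ⊢
      simp only [List.headI_cons, List.tail_cons]
      constructor
      · exact hpos b (by simp)
      · have := sum_map_sub_one t (fun x hx => hpos x (by simp [hx]))
        simp only [List.sum_cons] at hsum
        simp only [List.length_map] at *
        omega⟩
  left_inv p := by
    apply Subtype.ext
    apply Prod.ext
    · rfl
    · show ((p.1.2.map (· + 1))).map (· - 1) = p.1.2
      exact map_sub_map_add _
  right_inv c := by
    have hne : c.blocks ≠ [] := by
      intro h
      have := c.blocks_sum
      rw [h] at this
      simp at this
      omega
    obtain ⟨b, t, hbt⟩ := List.exists_cons_of_ne_nil hne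
    have hpos : ∀ x ∈ t, 0 < x := fun x hx => c.blocks_pos (by rw [hbt]; simp [hx])
    have h1 : c.blocks.headI = b := by rw [hbt]; rfl
    have h2 : c.blocks.tail = t := by rw [hbt]; rfl
    ext1
    show c.blocks.headI :: (c.blocks.tail.map (· - 1)).map (· + 1) = c.blocks
    rw [h1, h2, map_add_map_sub t hpos, hbt]

end Counting

/-- Counting the members of `M_k` up to isomorphism: `|M_k| = 2^{k-1}`. -/
theorem card_marked_trees (k : ℕ) (hk : 1 ≤ k) :
    Nat.card (Quot fun a b : {t : RTree // RTree.Mem k t} => RTree.Iso a.1 b.1)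
      = 2 ^ (k - 1) := by
  classical
  have hex : ∀ t : {t : RTree // RTree.Mem k t},
      ∃ p : ℕ × List ℕ, RTree.Spec t.1 p.1 p.2 ∧ validP k p := by
    rintro ⟨t, ht⟩
    obtain ⟨a, l, hs, ha, hsum⟩ := RTree.mem_spec ht
    exact ⟨(a, l), hs, ha, hsum⟩
  set f : {t : RTree // RTree.Mem k t} → {p : ℕ × List ℕ // validP k p} :=
    fun t => ⟨(hex t).choose, (hex t).choose_spec.2⟩ with hf
  have hfs : ∀ t, RTree.Spec t.1 (f t).1.1 (f t).1.2 := fun t => (hex t).choose_spec.1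
  have hconst : ∀ a b : {t : RTree // RTree.Mem k t}, RTree.Iso a.1 b.1 → f a = f b := by
    intro a b hab
    have h1 : RTree.Spec b.1 (f a).1.1 (f a).1.2 := (hfs a).iso hab
    obtain ⟨h2, h3⟩ := h1.unique (hfs b)
    exact Subtype.ext (Prod.ext h2 h3)
  set g : Quot (fun a b : {t : RTree // RTree.Mem k t} => RTree.Iso a.1 b.1) →
      {p : ℕ × List ℕ // validP k p} := Quot.lift f hconst with hg
  have hbij : Function.Bijective g := by
    constructor
    · intro x y
      refine Quot.induction_on₂ x y ?_
      intro a b hab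
      apply Quot.sound
      have hab' : f a = f b := hab
      have ha := hfs a
      rw [hab'] at ha
      exact RTree.spec_iso_spec ha (hfs b)
    · rintro ⟨⟨a, l⟩, hv⟩
      have hm : RTree.Mem k (RTree.mk a l) := RTree.mem_mk k a l hv.1 hv.2
      refine ⟨Quot.mk _ ⟨RTree.mk a l, hm⟩, ?_⟩
      show f ⟨RTree.mk a l, hm⟩ = ⟨(a, l), hv⟩
      have hs : RTree.Spec (RTree.mk a l) a l := RTree.spec_mk l a
      obtain ⟨h2, h3⟩ := (hfs ⟨RTree.mk a l, hm⟩).unique hs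
      exact Subtype.ext (Prod.ext h2 h3)
  rw [Nat.card_eq_of_bijective g hbij, Nat.card_congr (validEquiv k hk),
    Nat.card_eq_fintype_card, composition_card]
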